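/- Let ξ > 0, B > 0, A_0 > 0 with B·A_0² < 1. If h_p has density (ξ/A_0^ξ)x^(ξ−1) on [0, A_0], then E[log₂(1 + B·h_p²)] = log₂(1 + B·A_0²) − (A_0²·B/ln 2)·Φ(−A_0²·B, 1, 1 + ξ/2), where Φ is the Lerch transcendent. -/

import Mathlib

open MeasureTheory Real
open intervalIntegral

/-- The Lerch transcendent with `s = 1`: `Φ(z, 1, v) = Σ_{k≥0} z^k/(v+k)`. -/
noncomputable def lerchPhi (z v : ℝ) : ℝ := ∑' k : ℕ, z ^ k / (v + k)


lemma log_hasSum (w : ℝ) (hw0 : 0 ≤ w) (hw1 : w < 1) :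
    HasSum (fun n : ℕ => (-1 : ℝ) ^ n * w ^ (n + 1) / (n + 1)) (Real.log (1 + w)) := by
  have h := Real.hasSum_pow_div_log_of_abs_lt_one (x := -w) (by rw [abs_neg, abs_of_nonneg hw0]; exact hw1)
  have h2 := h.neg
  simp only [sub_neg_eq_add, neg_neg] at h2
  convert h2 using 2 with n
  · rfl
  rw [neg_pow]
  ring

lemma lhs_sum (ξ B A₀ : ℝ) (hξ : 0 < ξ) (hB : 0 < B) (hA₀ : 0 < A₀)
    (hBA : B * A₀ ^ 2 < 1) :
    (∫ x in (0:ℝ)..A₀, Real.log (1 + B * x ^ 2) * (ξ / A₀ ^ ξ * x ^ (ξ - 1)))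
      = ∑' n : ℕ, (-1 : ℝ) ^ n * (B * A₀ ^ 2) ^ (n + 1)
          * (ξ / (((n:ℝ) + 1) * (2 * ((n:ℝ) + 1) + ξ))) := by
  have hAξ : (0:ℝ) < A₀ ^ ξ := Real.rpow_pos_of_pos hA₀ ξ
  set d : ℕ → ℝ := fun n => B ^ (n + 1) * ξ / (((n:ℝ) + 1) * A₀ ^ ξ) with hd
  set e : ℕ → ℝ := fun n => 2 * ((n:ℝ) + 1) + ξ - 1 with he
  set F : ℕ → ℝ → ℝ := fun n x => (-1 : ℝ) ^ n * d n * x ^ (e n) with hF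
  have hd0 : ∀ n, 0 < d n := fun n => by
    have : (0:ℝ) < (n:ℝ) + 1 := by positivity
    exact div_pos (by positivity) (by positivity)
  have he0 : ∀ n, -1 < e n := fun n => by
    have : (0:ℝ) ≤ (n:ℝ) := Nat.cast_nonneg n
    simp only [he]; linarith
  have he1 : ∀ n, e n + 1 = 2 * ((n:ℝ) + 1) + ξ := fun n => by simp only [he]; ring
  have he1' : ∀ n, 0 < e n + 1 := fun n => by
    have : (0:ℝ) ≤ (n:ℝ) := Nat.cast_nonneg n
    rw [he1]; linarith
  -- value of the basic rpow integral
  have hJ : ∀ n, ∫ x in Set.Ioc (0:ℝ) A₀, x ^ (e n)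
      = (A₀ ^ 2) ^ (n + 1) * A₀ ^ ξ / (2 * ((n:ℝ) + 1) + ξ) := by
    intro n
    rw [← intervalIntegral.integral_of_le hA₀.le, integral_rpow (Or.inl (he0 n)),
      Real.zero_rpow (he1' n).ne', he1 n]
    congr 1
    rw [← Real.rpow_natCast (A₀ ^ 2) (n+1), ← Real.rpow_natCast A₀ 2, ← Real.rpow_mul hA₀.le,
      ← Real.rpow_add hA₀]
    push_cast
    ring_nf
  -- integrability
  have hInt : ∀ n, Integrable (F n) (volume.restrict (Set.Ioc (0:ℝ) A₀)) := by
    intro n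
    exact (((intervalIntegrable_iff_integrableOn_Ioc_of_le hA₀.le).mp
      (intervalIntegrable_rpow' (he0 n)))).const_mul _
  -- norm integrals
  have hnorm : ∀ n, (∫ x in Set.Ioc (0:ℝ) A₀, ‖F n x‖)
      = d n * ((A₀ ^ 2) ^ (n + 1) * A₀ ^ ξ / (2 * ((n:ℝ) + 1) + ξ)) := by
    intro n
    rw [show (fun x => ‖F n x‖) = fun x => ‖F n x‖ from rfl]
    rw [setIntegral_congr_fun measurableSet_Ioc
      (g := fun x => d n * x ^ (e n)) (fun x hx => by
        simp only [hF, Real.norm_eq_abs, abs_mul, abs_pow, abs_neg, abs_one, one_pow, one_mul,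
          abs_of_pos (hd0 n), abs_of_nonneg (Real.rpow_nonneg hx.1.le _)])]
    rw [MeasureTheory.integral_const_mul, hJ n]
  -- summability of norm integrals
  have hw0 : (0:ℝ) < B * A₀ ^ 2 := by positivity
  have hterm : ∀ n : ℕ, d n * ((A₀ ^ 2) ^ (n + 1) * A₀ ^ ξ / (2 * ((n:ℝ) + 1) + ξ))
      = (B * A₀ ^ 2) ^ (n + 1) * (ξ / (((n:ℝ) + 1) * (2 * ((n:ℝ) + 1) + ξ))) := by
    intro n
    have hn : (0:ℝ) ≤ (n:ℝ) := Nat.cast_nonneg n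
    have h1 : ((n:ℝ) + 1) ≠ 0 := by positivity
    have h3 : (2 * ((n:ℝ) + 1) + ξ) ≠ 0 := by positivity
    simp only [hd]
    rw [mul_pow]
    field_simp
  have hsummable : Summable (fun n => ∫ x in Set.Ioc (0:ℝ) A₀, ‖F n x‖) := by
    apply Summable.of_nonneg_of_le
      (fun n => integral_nonneg fun x => norm_nonneg _) (fun n => ?_)
      ((summable_geometric_of_lt_one hw0.le hBA).mul_left (B * A₀ ^ 2))
    rw [hnorm n, hterm n]
    have hn : (0:ℝ) ≤ (n:ℝ) := Nat.cast_nonneg n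
    have hden : ξ ≤ ((n:ℝ) + 1) * (2 * ((n:ℝ) + 1) + ξ) := by nlinarith
    have hq : ξ / (((n:ℝ) + 1) * (2 * ((n:ℝ) + 1) + ξ)) ≤ 1 :=
      (div_le_one (by positivity)).mpr hden
    calc (B * A₀ ^ 2) ^ (n + 1) * (ξ / (((n:ℝ) + 1) * (2 * ((n:ℝ) + 1) + ξ)))
        ≤ (B * A₀ ^ 2) ^ (n + 1) * 1 :=
          mul_le_mul_of_nonneg_left hq (by positivity)
      _ = (B * A₀ ^ 2) * (B * A₀ ^ 2) ^ n := by rw [mul_one, pow_succ]; ring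
  -- pointwise series expansion
  have hpt : ∀ x ∈ Set.Ioc (0:ℝ) A₀,
      Real.log (1 + B * x ^ 2) * (ξ / A₀ ^ ξ * x ^ (ξ - 1)) = ∑' n : ℕ, F n x := by
    intro x hx
    have hx0 : 0 < x := hx.1
    have hx2 : x ^ 2 ≤ A₀ ^ 2 := pow_le_pow_left₀ hx0.le hx.2 2
    have hu1 : B * x ^ 2 < 1 :=
      lt_of_le_of_lt (mul_le_mul_of_nonneg_left hx2 hB.le) hBA
    have hs := (log_hasSum (B * x ^ 2) (by positivity) hu1).mul_right (ξ / A₀ ^ ξ * x ^ (ξ - 1))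
    rw [← hs.tsum_eq]
    refine tsum_congr fun n => ?_
    simp only [hF, hd, he]
    have hxp : (B * x ^ 2) ^ (n + 1) = B ^ (n + 1) * x ^ ((2:ℝ) * ((n:ℝ) + 1)) := by
      rw [mul_pow, ← pow_mul, ← Real.rpow_natCast x (2 * (n + 1))]
      congr 1
      push_cast
      ring
    rw [hxp, show (2 * ((n:ℝ) + 1) + ξ - 1) = (2:ℝ) * ((n:ℝ) + 1) + (ξ - 1) by ring,
      Real.rpow_add hx0]
    have h1 : ((n:ℝ) + 1) ≠ 0 := by positivity
    field_simp
  -- assemble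
  rw [intervalIntegral.integral_of_le hA₀.le, setIntegral_congr_fun measurableSet_Ioc hpt,
    ← integral_tsum_of_summable_integral_norm hInt hsummable]
  refine tsum_congr fun n => ?_
  have hval : (∫ x in Set.Ioc (0:ℝ) A₀, F n x)
      = (-1:ℝ) ^ n * d n * ((A₀ ^ 2) ^ (n + 1) * A₀ ^ ξ / (2 * ((n:ℝ) + 1) + ξ)) := by
    simp only [hF, mul_assoc]
    rw [MeasureTheory.integral_const_mul, MeasureTheory.integral_const_mul, hJ n]
  rw [hval, mul_assoc, hterm n]
  ring

lemma phi_summable (w ξ : ℝ) (hw0 : 0 ≤ w) (hw1 : w < 1) (hξ : 0 < ξ) :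
    Summable (fun k : ℕ => (-w) ^ k / (1 + ξ / 2 + k)) := by
  apply Summable.of_abs
  apply Summable.of_nonneg_of_le (fun k => abs_nonneg _) (fun k => ?_)
    (summable_geometric_of_lt_one hw0 hw1)
  have hk : (0:ℝ) ≤ (k:ℝ) := Nat.cast_nonneg k
  have hden : (1 : ℝ) ≤ 1 + ξ / 2 + k := by linarith
  rw [abs_div, abs_pow, abs_neg, abs_of_nonneg hw0, abs_of_nonneg (by linarith)]
  calc w ^ k / (1 + ξ / 2 + k) ≤ w ^ k / 1 :=
        div_le_div_of_nonneg_left (pow_nonneg hw0 k) one_pos hden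
    _ = w ^ k := by ring

lemma rhs_sum (w ξ : ℝ) (hw0 : 0 < w) (hw1 : w < 1) (hξ : 0 < ξ) :
    Real.log (1 + w) - w * lerchPhi (-w) (1 + ξ / 2)
      = ∑' n : ℕ, (-1 : ℝ) ^ n * w ^ (n + 1) * (ξ / (((n:ℝ) + 1) * (2 * ((n:ℝ) + 1) + ξ))) := by
  have ha := log_hasSum w hw0.le hw1
  have hb := ((phi_summable w ξ hw0.le hw1 hξ).hasSum).mul_left w
  rw [lerchPhi, ← (ha.sub hb).tsum_eq]
  refine tsum_congr fun n => ?_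
  have h1 : ((n:ℝ) + 1) ≠ 0 := by positivity
  have hk : (0:ℝ) ≤ (n:ℝ) := Nat.cast_nonneg n
  have h2 : (1 + ξ / 2 + (n:ℝ)) ≠ 0 := by linarith
  have h3 : (2 * ((n:ℝ) + 1) + ξ) ≠ 0 := by linarith
  rw [neg_pow]
  field_simp
  ring

/-- If `h_p` has density `(ξ/A₀^ξ) x^(ξ-1)` on `[0, A₀]` and `B A₀² < 1`, then
`E[log₂(1+B h_p²)] = log₂(1+B A₀²) − (A₀²B/ln 2) Φ(−A₀²B, 1, 1+ξ/2)`. -/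
theorem stmt_7 (ξ B A₀ : ℝ) (hξ : 0 < ξ) (hB : 0 < B) (hA₀ : 0 < A₀)
    (hBA : B * A₀ ^ 2 < 1) :
    (∫ x in (0 : ℝ)..A₀, Real.logb 2 (1 + B * x ^ 2) * (ξ / A₀ ^ ξ * x ^ (ξ - 1)))
      = Real.logb 2 (1 + B * A₀ ^ 2)
        - (A₀ ^ 2 * B / Real.log 2) * lerchPhi (-(A₀ ^ 2 * B)) (1 + ξ / 2) := by
  have hw0 : (0:ℝ) < B * A₀ ^ 2 := by positivity
  have hR := rhs_sum (B * A₀ ^ 2) ξ hw0 hBA hξ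
  have hmain : (∫ x in (0:ℝ)..A₀, Real.logb 2 (1 + B * x ^ 2) * (ξ / A₀ ^ ξ * x ^ (ξ - 1)))
      = (∫ x in (0:ℝ)..A₀, Real.log (1 + B * x ^ 2) * (ξ / A₀ ^ ξ * x ^ (ξ - 1)))
        / Real.log 2 := by
    rw [← intervalIntegral.integral_div]
    refine intervalIntegral.integral_congr fun x _ => ?_
    rw [Real.logb]
    ring
  rw [hmain, lhs_sum ξ B A₀ hξ hB hA₀ hBA, ← hR]
  simp only [Real.logb, mul_comm (A₀ ^ 2) B]
  ring
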